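/- Let G = AB be a finite group with A and B abelian subgroups. Then the derived subgroup G' is abelian, i.e. G is metabelian. -/

import Mathlib

section ItoAux

variable {G : Type*} [Group G]

/-- Conjugating a commutator `a⁻¹b⁻¹ab` by an element `a'` commuting with `a`,
given a factorization `b * a' = a₁ * b₁` with `a₁` commuting with `a`. -/
private lemma ito_conjA {a b a' a₁ b₁ : G}
    (c1 : a * a' = a' * a) (c2 : a * a₁ = a₁ * a)
    (hfac : b * a' = a₁ * b₁) :
    a'⁻¹ * (a⁻¹ * b⁻¹ * a * b) * a' = a⁻¹ * b₁⁻¹ * a * b₁ := by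
  have hb : b = a₁ * b₁ * a'⁻¹ := by rw [← hfac]; group
  subst hb
  have e1 : a'⁻¹ * a⁻¹ * a' = a⁻¹ := by
    have c1' : Commute a a' := c1
    rw [mul_assoc, c1'.inv_left.eq, ← mul_assoc, inv_mul_cancel, one_mul]
  have e2 : a₁⁻¹ * a * a₁ = a := by
    rw [mul_assoc, c2, ← mul_assoc, inv_mul_cancel, one_mul]
  calc a'⁻¹ * (a⁻¹ * (a₁ * b₁ * a'⁻¹)⁻¹ * a * (a₁ * b₁ * a'⁻¹)) * a'
      = (a'⁻¹ * a⁻¹ * a') * b₁⁻¹ * (a₁⁻¹ * a * a₁) * b₁ := by group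
    _ = a⁻¹ * b₁⁻¹ * a * b₁ := by rw [e1, e2]

/-- Conjugating a commutator `a⁻¹b⁻¹ab` by an element `b'` commuting with `b`,
given a factorization `a * b' = b₂ * a₂` with `b₂` commuting with `b`. -/
private lemma ito_conjB {a b b' b₂ a₂ : G}
    (c1 : b * b' = b' * b) (c2 : b * b₂ = b₂ * b)
    (hfac : a * b' = b₂ * a₂) :
    b'⁻¹ * (a⁻¹ * b⁻¹ * a * b) * b' = a₂⁻¹ * b⁻¹ * a₂ * b := by
  have ha : a = b₂ * a₂ * b'⁻¹ := by rw [← hfac]; group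
  subst ha
  have e1 : b₂⁻¹ * b⁻¹ * b₂ = b⁻¹ := by
    have c2' : Commute b b₂ := c2
    rw [mul_assoc, c2'.inv_left.eq, ← mul_assoc, inv_mul_cancel, one_mul]
  have e2 : b'⁻¹ * b * b' = b := by
    rw [mul_assoc, c1, ← mul_assoc, inv_mul_cancel, one_mul]
  calc b'⁻¹ * ((b₂ * a₂ * b'⁻¹)⁻¹ * b⁻¹ * (b₂ * a₂ * b'⁻¹) * b) * b'
      = a₂⁻¹ * (b₂⁻¹ * b⁻¹ * b₂) * a₂ * (b'⁻¹ * b * b') := by group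
    _ = a₂⁻¹ * b⁻¹ * a₂ * b := by rw [e1, e2]

end ItoAux

/-- Itô: a finite group that is the product of two abelian subgroups is metabelian. -/
theorem metabelian_of_mul_abelian {G : Type*} [Group G] [Finite G]
    (A B : Subgroup G)
    (hA : ∀ x ∈ A, ∀ y ∈ A, x * y = y * x)
    (hB : ∀ x ∈ B, ∀ y ∈ B, x * y = y * x)
    (hfact : ∀ g : G, ∃ a ∈ A, ∃ b ∈ B, g = a * b) :
    ∀ x ∈ commutator G, ∀ y ∈ commutator G, x * y = y * x := by
  -- the set of basic commutators
  set K : Set G := {x | ∃ a ∈ A, ∃ b ∈ B, x = a⁻¹ * b⁻¹ * a * b} with hK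
  -- reversed factorization G = B * A
  have hBA : ∀ g : G, ∃ b ∈ B, ∃ a ∈ A, g = b * a := by
    intro g
    obtain ⟨a, ha, b, hb, hg⟩ := hfact g⁻¹
    exact ⟨b⁻¹, inv_mem hb, a⁻¹, inv_mem ha, by rw [← mul_inv_rev, ← hg, inv_inv]⟩
  -- K is closed under conjugation
  have hKconj : ∀ g : G, ∀ x ∈ K, g⁻¹ * x * g ∈ K := by
    rintro g x ⟨a, ha, b, hb, rfl⟩
    obtain ⟨ag, hag, bg, hbg, rfl⟩ := hfact g
    obtain ⟨a₁, ha₁, b₁, hb₁, hfac1⟩ := hfact (b * ag)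
    obtain ⟨b₂, hb₂, a₂, ha₂, hfac2⟩ := hBA (a * bg)
    have step1 : ag⁻¹ * (a⁻¹ * b⁻¹ * a * b) * ag = a⁻¹ * b₁⁻¹ * a * b₁ :=
      ito_conjA (hA a ha ag hag) (hA a ha a₁ ha₁) hfac1
    have step2 : bg⁻¹ * (a⁻¹ * b₁⁻¹ * a * b₁) * bg = a₂⁻¹ * b₁⁻¹ * a₂ * b₁ :=
      ito_conjB (hB b₁ hb₁ bg hbg) (hB b₁ hb₁ b₂ hb₂) hfac2
    have : (ag * bg)⁻¹ * (a⁻¹ * b⁻¹ * a * b) * (ag * bg)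
        = bg⁻¹ * (ag⁻¹ * (a⁻¹ * b⁻¹ * a * b) * ag) * bg := by group
    rw [this, step1, step2]
    exact ⟨a₂, ha₂, b₁, hb₁, rfl⟩
  -- elements of K pairwise commute
  have hKcomm : ∀ x ∈ K, ∀ y ∈ K, x * y = y * x := by
    rintro x ⟨a, ha, b, hb, rfl⟩ y ⟨a', ha', b', hb', rfl⟩
    obtain ⟨a₁, ha₁, b₁, hb₁, hfac1⟩ := hfact (b * a'⁻¹)
    obtain ⟨b₂, hb₂, a₂, ha₂, hfac2⟩ := hBA (a * b'⁻¹)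
    have step1 : (a'⁻¹)⁻¹ * (a⁻¹ * b⁻¹ * a * b) * a'⁻¹ = a⁻¹ * b₁⁻¹ * a * b₁ :=
      ito_conjA (hA a ha a'⁻¹ (inv_mem ha')) (hA a ha a₁ ha₁) hfac1
    have step2 : (b'⁻¹)⁻¹ * (a⁻¹ * b₁⁻¹ * a * b₁) * b'⁻¹ = a₂⁻¹ * b₁⁻¹ * a₂ * b₁ :=
      ito_conjB (hB b₁ hb₁ b'⁻¹ (inv_mem hb')) (hB b₁ hb₁ b₂ hb₂) hfac2
    have hfac3 : b₁ * a' = a₁⁻¹ * b := by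
      apply mul_left_cancel (a := a₁)
      rw [← mul_assoc, ← hfac1]; group
    have step3 : a'⁻¹ * (a₂⁻¹ * b₁⁻¹ * a₂ * b₁) * a' = a₂⁻¹ * b⁻¹ * a₂ * b :=
      ito_conjA (hA a₂ ha₂ a' ha') (hA a₂ ha₂ a₁⁻¹ (inv_mem ha₁)) hfac3
    have hfac4 : a₂ * b' = b₂⁻¹ * a := by
      apply mul_left_cancel (a := b₂)
      rw [← mul_assoc, ← hfac2]; group
    have step4 : b'⁻¹ * (a₂⁻¹ * b⁻¹ * a₂ * b) * b' = a⁻¹ * b⁻¹ * a * b :=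
      ito_conjB (hB b hb b' hb') (hB b hb b₂⁻¹ (inv_mem hb₂)) hfac4
    have key : (a'⁻¹ * b'⁻¹ * a' * b')⁻¹ * (a⁻¹ * b⁻¹ * a * b) * (a'⁻¹ * b'⁻¹ * a' * b')
        = a⁻¹ * b⁻¹ * a * b := by
      have expand : (a'⁻¹ * b'⁻¹ * a' * b')⁻¹ * (a⁻¹ * b⁻¹ * a * b) * (a'⁻¹ * b'⁻¹ * a' * b')
          = b'⁻¹ * (a'⁻¹ * ((b'⁻¹)⁻¹ * ((a'⁻¹)⁻¹ * (a⁻¹ * b⁻¹ * a * b) * a'⁻¹) * b'⁻¹) * a') * b' := by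
        group
      rw [expand, step1, step2, step3, step4]
    calc (a⁻¹ * b⁻¹ * a * b) * (a'⁻¹ * b'⁻¹ * a' * b')
        = (a'⁻¹ * b'⁻¹ * a' * b') *
          ((a'⁻¹ * b'⁻¹ * a' * b')⁻¹ * (a⁻¹ * b⁻¹ * a * b) * (a'⁻¹ * b'⁻¹ * a' * b')) := by group
      _ = (a'⁻¹ * b'⁻¹ * a' * b') * (a⁻¹ * b⁻¹ * a * b) := by rw [key]
  -- N = closure of K
  set N : Subgroup G := Subgroup.closure K with hN
  -- N is abelian
  have hNcomm : ∀ x ∈ N, ∀ y ∈ N, x * y = y * x := by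
    intro x hx y hy
    refine Subgroup.closure_induction₂
      (p := fun x y _ _ => x * y = y * x) ?_ ?_ ?_ ?_ ?_ ?_ ?_ hx hy
    · exact fun u v hu hv => hKcomm u hu v hv
    · intro u _; rw [one_mul, mul_one]
    · intro u _; rw [one_mul, mul_one]
    · intro u v w _ _ _ h1 h2
      rw [mul_assoc, h2, ← mul_assoc, h1, mul_assoc]
    · intro u v w _ _ _ h1 h2
      rw [← mul_assoc, h1, mul_assoc, h2, ← mul_assoc]
    · intro u v _ _ h
      have : Commute u v := h
      exact this.inv_left.eq
    · intro u v _ _ h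
      have : Commute u v := h
      exact this.inv_right.eq
  -- N is normal
  have hNnormal : N.Normal := by
    constructor
    intro n hn g
    have : ∀ m ∈ N, ∀ g : G, g * m * g⁻¹ ∈ N := by
      intro m hm
      refine Subgroup.closure_induction (p := fun m _ => ∀ g : G, g * m * g⁻¹ ∈ N)
        ?_ ?_ ?_ ?_ hm
      · intro u hu g
        have := hKconj g⁻¹ u hu
        rw [inv_inv] at this
        exact Subgroup.subset_closure this
      · intro g; simpa using one_mem N
      · intro u v _ _ h1 h2 g
        have : g * (u * v) * g⁻¹ = (g * u * g⁻¹) * (g * v * g⁻¹) := by group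
        rw [this]; exact mul_mem (h1 g) (h2 g)
      · intro u _ h g
        have : g * u⁻¹ * g⁻¹ = (g * u * g⁻¹)⁻¹ := by group
        rw [this]; exact inv_mem (h g)
    exact this n hn g
  -- the commutator subgroup is contained in N
  have hGN : commutator G ≤ N := by
    rw [commutator_def, Subgroup.commutator_le]
    intro g _ h _
    obtain ⟨a, ha, b, hb, rfl⟩ := hfact g
    obtain ⟨a', ha', b', hb', rfl⟩ := hfact h
    -- show commutativity of images in the quotient G ⧸ N
    have comm_mk : ∀ u v : G, v⁻¹ * u⁻¹ * v * u ∈ N → Commute ((u : G ⧸ N)) (v : G ⧸ N) := by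
      intro u v huv
      have : ((u * v : G) : G ⧸ N) = ((v * u : G) : G ⧸ N) := by
        rw [QuotientGroup.eq]
        have : (u * v)⁻¹ * (v * u) = (v⁻¹ * u⁻¹ * v * u)⁻¹⁻¹ := by group
        rw [this]
        exact inv_mem (inv_mem huv)
      rw [QuotientGroup.mk_mul, QuotientGroup.mk_mul] at this
      exact this
    have cAB : ∀ u ∈ A, ∀ v ∈ B, Commute ((u : G ⧸ N)) (v : G ⧸ N) := by
      intro u hu v hv
      refine comm_mk u v ?_
      have hk : u⁻¹ * v⁻¹ * u * v ∈ N := Subgroup.subset_closure ⟨u, hu, v, hv, rfl⟩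
      have heq : v⁻¹ * u⁻¹ * v * u = (u⁻¹ * v⁻¹ * u * v)⁻¹ := by group
      rw [heq]; exact inv_mem hk
    have cAA : ∀ u ∈ A, ∀ v ∈ A, Commute ((u : G ⧸ N)) (v : G ⧸ N) := by
      intro u hu v hv
      have h2 : ((u * v : G) : G ⧸ N) = ((v * u : G) : G ⧸ N) := by rw [hA u hu v hv]
      rw [QuotientGroup.mk_mul, QuotientGroup.mk_mul] at h2
      exact h2
    have cBB : ∀ u ∈ B, ∀ v ∈ B, Commute ((u : G ⧸ N)) (v : G ⧸ N) := by
      intro u hu v hv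
      have h2 : ((u * v : G) : G ⧸ N) = ((v * u : G) : G ⧸ N) := by rw [hB u hu v hv]
      rw [QuotientGroup.mk_mul, QuotientGroup.mk_mul] at h2
      exact h2
    have hq : Commute ((a * b : G) : G ⧸ N) ((a' * b' : G) : G ⧸ N) := by
      rw [QuotientGroup.mk_mul, QuotientGroup.mk_mul]
      exact ((cAA a ha a' ha').mul_right (cAB a ha b' hb')).mul_left
        (((cAB a' ha' b hb).symm).mul_right (cBB b hb b' hb'))
    open scoped commutatorElement in
    have hone : ((⁅a * b, a' * b'⁆ : G) : G ⧸ N) = 1 := by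
      have hmap := map_commutatorElement (QuotientGroup.mk' N) (a * b) (a' * b')
      simp only [QuotientGroup.mk'_apply] at hmap
      rw [hmap, commutatorElement_eq_one_iff_commute]
      exact hq
    exact (QuotientGroup.eq_one_iff _).mp hone
  intro x hx y hy
  exact hNcomm x (hGN hx) y (hGN hy)
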